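/- Suppose ε ∈ (0,1), κ = 1−ε, and p_n = (ln n + (k−1) ln ln n − ω_n)/(κ n) with ω_n → ∞ and ω_n = o(ln n). Then for every sequence of integers s_n with |s_n − κn| ≤ n^{2/3}, the quantity α_{s_n} defined by p_n = (ln s_n + (k−1) ln ln s_n + α_{s_n})/s_n satisfies α_{s_n} → −∞. -/

import Mathlib

open Filter Real

/-- Subcritical regime: below the shifted threshold
`p_n = (ln n + (k-1) ln ln n + ω_n)/(κ n)` with `ω_n → ∞`, `ω_n = o(ln n)`,
every typical survival size `s_n ≈ κ n` has threshold offset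
`α_{s_n} = p_n s_n - ln s_n - (k-1) ln ln s_n` tending to `-∞`. -/
theorem subcritical_offset (ε : ℝ) (hε : ε ∈ Set.Ioo (0 : ℝ) 1) (k : ℕ) (hk : 1 ≤ k)
    (ω : ℕ → ℝ) (hω : Tendsto ω atTop atTop)
    (hωo : Tendsto (fun n => ω n / Real.log n) atTop (nhds 0))
    (s : ℕ → ℕ) (hs : ∀ n, |(s n : ℝ) - (1 - ε) * n| ≤ (n : ℝ) ^ ((2 : ℝ)/3)) :
    Tendsto (fun n : ℕ =>
        ((Real.log n + (k - 1 : ℝ) * Real.log (Real.log n) - ω n) / ((1 - ε) * n))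
            * (s n : ℝ)
          - Real.log (s n) - (k - 1 : ℝ) * Real.log (Real.log (s n)))
      atTop atBot := by
  obtain ⟨hε0, hε1⟩ := hε
  set κ : ℝ := 1 - ε with hκdef
  have hκ : 0 < κ := by simp only [hκdef]; linarith
  have hk1 : (0:ℝ) ≤ (k - 1 : ℝ) := by
    have : (1:ℝ) ≤ (k:ℝ) := by exact_mod_cast hk
    linarith
  have hn : Tendsto (fun n : ℕ => (n:ℝ)) atTop atTop := tendsto_natCast_atTop_atTop
  have hn3 : Tendsto (fun n : ℕ => (n:ℝ) ^ (-(1/3 : ℝ))) atTop (nhds 0) :=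
    (tendsto_rpow_neg_atTop (by norm_num)).comp hn
  -- difference s/n - κ tends to 0
  have hbound : ∀ᶠ n : ℕ in atTop, |(s n : ℝ)/n - κ| ≤ (n:ℝ) ^ (-(1/3:ℝ)) := by
    filter_upwards [eventually_ge_atTop 1] with n hn1
    have hnpos : (0:ℝ) < n := by exact_mod_cast hn1
    have h1 : (s n : ℝ)/n - κ = ((s n : ℝ) - κ * n)/n := by field_simp
    rw [h1, abs_div, abs_of_pos hnpos]
    calc |(s n:ℝ) - κ*n| / n ≤ (n:ℝ)^((2:ℝ)/3) / n := by gcongr; exact hs n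
      _ = (n:ℝ)^(-(1/3:ℝ)) := by
          rw [show ((2:ℝ)/3) = -(1/3) + 1 by norm_num, Real.rpow_add hnpos, Real.rpow_one]
          field_simp
  have hdiff : Tendsto (fun n : ℕ => (s n : ℝ)/n - κ) atTop (nhds 0) :=
    squeeze_zero_norm' (by simpa using hbound) hn3
  have hsn : Tendsto (fun n : ℕ => (s n : ℝ)/n) atTop (nhds κ) := by
    have := hdiff.add (tendsto_const_nhds (x := κ))
    simpa using this
  -- s n → ∞ (as reals)
  have hS : Tendsto (fun n : ℕ => (s n : ℝ)) atTop atTop := by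
    have h := hsn.pos_mul_atTop hκ hn
    refine h.congr' ?_
    filter_upwards [eventually_ge_atTop 1] with n hn1
    have hnne : (n:ℝ) ≠ 0 := by positivity
    field_simp
  -- log s - log n → log κ
  have hlogd : Tendsto (fun n : ℕ => Real.log (s n) - Real.log n) atTop (nhds (Real.log κ)) := by
    have h := ((Real.continuousAt_log hκ.ne').tendsto).comp hsn
    refine h.congr' ?_
    filter_upwards [hS.eventually_ge_atTop 1, eventually_ge_atTop 1] with n h1 h2
    have hs0 : (s n : ℝ) ≠ 0 := by linarith
    have hn0 : (n : ℝ) ≠ 0 := by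
      have : (1:ℝ) ≤ n := by exact_mod_cast h2
      linarith
    simp only [Function.comp]
    rw [Real.log_div hs0 hn0]
  -- log log s - log log n → 0
  have hlogn : Tendsto (fun n : ℕ => Real.log n) atTop atTop :=
    Real.tendsto_log_atTop.comp hn
  have hlogs : Tendsto (fun n : ℕ => Real.log (s n)) atTop atTop :=
    Real.tendsto_log_atTop.comp hS
  have hinv : Tendsto (fun n : ℕ => (Real.log n)⁻¹) atTop (nhds 0) :=
    hlogn.inv_tendsto_atTop
  have hr : Tendsto (fun n : ℕ => 1 + (Real.log (s n) - Real.log n) * (Real.log n)⁻¹)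
      atTop (nhds 1) := by
    have := (tendsto_const_nhds (x := (1:ℝ))).add (hlogd.mul hinv)
    simpa using this
  have hloglogd : Tendsto (fun n : ℕ => Real.log (Real.log (s n)) - Real.log (Real.log n))
      atTop (nhds 0) := by
    have h := ((Real.continuousAt_log one_ne_zero).tendsto).comp hr
    rw [Real.log_one] at h
    refine h.congr' ?_
    filter_upwards [hlogn.eventually_ge_atTop 1, hlogs.eventually_ge_atTop 1] with n h1 h2
    have hln0 : Real.log n ≠ 0 := by linarith
    have hls0 : Real.log (s n) ≠ 0 := by linarith
    simp only [Function.comp]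
    have : 1 + (Real.log (s n) - Real.log n) * (Real.log n)⁻¹
        = Real.log (s n) / Real.log n := by field_simp; ring
    rw [this, Real.log_div hls0 hln0]
  -- the correction term T1 → 0
  have hL3 : Tendsto (fun n : ℕ => Real.log n / (n:ℝ) ^ ((1:ℝ)/3)) atTop (nhds 0) :=
    ((isLittleO_log_rpow_atTop (by norm_num : (0:ℝ) < 1/3)).tendsto_div_nhds_zero).comp hn
  have hB : Tendsto (fun n : ℕ => ((k:ℝ)+1)/κ * (Real.log n / (n:ℝ) ^ ((1:ℝ)/3)))
      atTop (nhds 0) := by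
    have := hL3.const_mul (((k:ℝ)+1)/κ)
    simpa using this
  have hT1 : Tendsto (fun n : ℕ =>
      (Real.log n + (k - 1 : ℝ) * Real.log (Real.log n) - ω n) * ((s n : ℝ)/(κ*n) - 1))
      atTop (nhds 0) := by
    refine squeeze_zero_norm' ?_ hB
    filter_upwards [eventually_ge_atTop 3, hω.eventually_ge_atTop 0,
      hωo.eventually_lt_const (by norm_num : (0:ℝ) < 1),
      hlogn.eventually_ge_atTop 1] with n hn3' hω0 hω1 hL1
    have hnpos : (0:ℝ) < n := by
      have : (3:ℝ) ≤ n := by exact_mod_cast hn3'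
      linarith
    have hLpos : 0 < Real.log n := by linarith
    have hωL : ω n ≤ Real.log n := by
      have := (div_lt_one hLpos).mp hω1
      linarith
    have hM0 : 0 ≤ Real.log (Real.log n) := Real.log_nonneg hL1
    have hLn : Real.log n ≤ (n:ℝ) := by
      have := Real.log_le_sub_one_of_pos hnpos
      linarith
    have hML : Real.log (Real.log n) ≤ Real.log n :=
      Real.log_le_log hLpos hLn
    -- bound |A|
    have hA : |Real.log n + (k - 1 : ℝ) * Real.log (Real.log n) - ω n|
        ≤ ((k:ℝ)+1) * Real.log n := by
      have h4 : (k-1:ℝ) * Real.log (Real.log n) ≤ (k-1:ℝ) * Real.log n :=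
        mul_le_mul_of_nonneg_left hML hk1
      have h5 : (0:ℝ) ≤ (k-1:ℝ) * Real.log (Real.log n) := mul_nonneg hk1 hM0
      rw [abs_le]
      constructor
      · linarith
      · linarith
    -- bound |u|
    have hu : |(s n : ℝ)/(κ*n) - 1| ≤ (n:ℝ)^(-(1/3:ℝ)) / κ := by
      have hκn : (0:ℝ) < κ * n := by positivity
      have h1 : (s n : ℝ)/(κ*n) - 1 = ((s n : ℝ) - κ*n)/(κ*n) := by field_simp
      have h2 : ((n:ℝ)^((2:ℝ)/3)) / (κ * n) = (n:ℝ)^(-(1/3:ℝ)) / κ := by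
        rw [show ((2:ℝ)/3) = -(1/3) + 1 by norm_num, Real.rpow_add hnpos, Real.rpow_one]
        field_simp
      rw [h1, abs_div, abs_of_pos hκn, ← h2]
      gcongr
      exact hs n
    rw [Real.norm_eq_abs, abs_mul]
    have hn13 : (n:ℝ)^(-(1/3:ℝ)) = ((n:ℝ)^((1:ℝ)/3))⁻¹ := by
      rw [← Real.rpow_neg_one, ← Real.rpow_mul hnpos.le]
      norm_num
    calc |Real.log n + (k - 1 : ℝ) * Real.log (Real.log n) - ω n| * |(s n : ℝ)/(κ*n) - 1|
        ≤ (((k:ℝ)+1) * Real.log n) * ((n:ℝ)^(-(1/3:ℝ)) / κ) := by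
          apply mul_le_mul hA hu (abs_nonneg _)
          positivity
      _ = ((k:ℝ)+1)/κ * (Real.log n / (n:ℝ) ^ ((1:ℝ)/3)) := by
          rw [hn13]; field_simp
  -- assemble
  have hωneg : Tendsto (fun n : ℕ => -ω n) atTop atBot := tendsto_neg_atBot_iff.mpr hω
  have hC : Tendsto (fun n : ℕ =>
      (Real.log n + (k - 1 : ℝ) * Real.log (Real.log n) - ω n) * ((s n : ℝ)/(κ*n) - 1)
      + (-(Real.log (s n) - Real.log n))
      + (k - 1 : ℝ) * (-(Real.log (Real.log (s n)) - Real.log (Real.log n))))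
      atTop (nhds (0 + (-(Real.log κ)) + (k-1:ℝ) * (-0))) :=
    (hT1.add hlogd.neg).add (hloglogd.neg.const_mul _)
  have hfinal := hC.add_atBot hωneg
  refine hfinal.congr fun n => ?_
  ring
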